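/- arXiv:0909.1464 — 2 statements merged into one kernel-verified Lean document; each statement's English description precedes it below -/
import Mathlib

section
/- Let N_g ≥ 4N_c+1, V a real-valued continuous R-periodic function, and v_{N_c}, w_{N_c} ∈ V_{N_c}. Then ∫_Γ I_{N_g}(V v_{N_c} w_{N_c}) = ∫_Γ I_{N_g}(V) v_{N_c} w_{N_c}, where I_{N_g} is the grid interpolation operator onto W^{3D}_{N_g}. -/
open MeasureTheory

noncomputable section

namespace TFW

/-- squared euclidean norm of an integer wavevector index -/
def zsq (n : Fin 3 → ℤ) : ℝ := ∑ i, ((n i : ℝ))^2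

/-- norm of the wavevector k = (2π/L) n -/
def knorm (L : ℝ) (n : Fin 3 → ℤ) : ℝ := (2 * Real.pi / L) * Real.sqrt (zsq n)

/-- Sobolev weight (1+|k|²)^s -/
def sobW (L s : ℝ) (n : Fin 3 → ℤ) : ℝ := (1 + (knorm L n)^2) ^ s

/-- H^s norm from Fourier coefficients -/
def Hnorm (L s : ℝ) (c : (Fin 3 → ℤ) → ℂ) : ℝ :=
  Real.sqrt (∑' n : Fin 3 → ℤ, sobW L s n * ‖c n‖^2)

/-- Fourier truncation to |k| ≤ 2πN_c/L -/
def trunc (L : ℝ) (Nc : ℕ) (c : (Fin 3 → ℤ) → ℂ) : (Fin 3 → ℤ) → ℂ :=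
  fun n => if knorm L n ≤ 2 * Real.pi * Nc / L then c n else 0

/-- the planewave e_k, k = (2π/L)n -/
def ek (L : ℝ) (n : Fin 3 → ℤ) (x : Fin 3 → ℝ) : ℂ :=
  (((L ^ 3 : ℝ) ^ (-(1/2 : ℝ)) : ℝ) : ℂ) *
    Complex.exp (Complex.I * ((2 * Real.pi / L : ℝ) : ℂ) * ∑ i, (n i : ℂ) * (x i : ℂ))

/-- function with Fourier coefficients c -/
def fromCoeff (L : ℝ) (c : (Fin 3 → ℤ) → ℂ) (x : Fin 3 → ℝ) : ℂ :=
  ∑' n : Fin 3 → ℤ, c n * ek L n x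

/-- the simulation cell Γ = [0,L)³ -/
def Gam (L : ℝ) : Set (Fin 3 → ℝ) := Set.univ.pi fun _ => Set.Ico 0 L

/-- point of the cartesian grid G_{N_g} in Γ -/
def gridPt (L : ℝ) (Ng : ℕ) (m : Fin 3 → Fin Ng) : Fin 3 → ℝ :=
  fun i => (L / Ng) * (m i : ℝ)

/-- discrete Fourier transform on the grid -/
def dft (L : ℝ) (Ng : ℕ) (φ : (Fin 3 → ℝ) → ℂ) (n : Fin 3 → ℤ) : ℂ :=
  ((Ng : ℂ) ^ 3)⁻¹ * ∑ m : Fin 3 → Fin Ng, φ (gridPt L Ng m) *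
    Complex.exp (-(Complex.I * ((2 * Real.pi / L : ℝ) : ℂ) *
      ∑ i, (n i : ℂ) * ((gridPt L Ng m i : ℝ) : ℂ)))

/-- cube of integer vectors with entries in [-R,R] -/
def cube (R : ℤ) : Finset (Fin 3 → ℤ) := Fintype.piFinset fun _ => Finset.Icc (-R) R

/-- wavevector indices with |k| ≤ 2πN/L -/
def ball (L : ℝ) (N : ℕ) : Finset (Fin 3 → ℤ) :=
  (cube N).filter fun n => knorm L n ≤ 2 * Real.pi * N / L

/-- modes used by the interpolation operator (N_g odd) -/
def interpModes (Ng : ℕ) : Finset (Fin 3 → ℤ) := cube (((Ng : ℤ) - 1) / 2)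

/-- interpolation operator I_{N_g} (for N_g odd) -/
def interp (L : ℝ) (Ng : ℕ) (φ : (Fin 3 → ℝ) → ℂ) (x : Fin 3 → ℝ) : ℂ :=
  (((L ^ 3 : ℝ) ^ ((1/2 : ℝ)) : ℝ) : ℂ) * ∑ n ∈ interpModes Ng, dft L Ng φ n * ek L n x

/-- truncated interpolant Π_{2N_c}(I_{N_g} φ) (valid when N_g ≥ 4N_c+1, N_g odd) -/
def truncInterp (L : ℝ) (Ng Nc : ℕ) (φ : (Fin 3 → ℝ) → ℂ) (x : Fin 3 → ℝ) : ℂ :=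
  (((L ^ 3 : ℝ) ^ ((1/2 : ℝ)) : ℝ) : ℂ) * ∑ n ∈ ball L (2 * Nc), dft L Ng φ n * ek L n x

/-- Fourier coefficient of a function on Γ -/
def fCoeff (L : ℝ) (f : (Fin 3 → ℝ) → ℂ) (n : Fin 3 → ℤ) : ℂ :=
  ∫ x in Gam L, f x * (starRingEnd ℂ) (ek L n x)

/-- periodic Coulomb bilinear form from Fourier coefficients -/
def DGam (L : ℝ) (c d : (Fin 3 → ℤ) → ℂ) : ℂ :=
  ((4 * Real.pi : ℝ) : ℂ) * ∑' n : Fin 3 → ℤ,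
    if n = 0 then 0 else ((((knorm L n) ^ 2)⁻¹ : ℝ) : ℂ) * (starRingEnd ℂ) (c n) * d n

end TFW

section Stmt4Aux

open MeasureTheory Complex

/-- the bare exponential planewave -/
def Efun (L : ℝ) (a : Fin 3 → ℤ) (x : Fin 3 → ℝ) : ℂ :=
  Complex.exp (Complex.I * ((2 * Real.pi / L : ℝ) : ℂ) * ∑ i, (a i : ℂ) * ((x i : ℝ) : ℂ))

lemma ek_eq (L : ℝ) (n : Fin 3 → ℤ) (x : Fin 3 → ℝ) :
    TFW.ek L n x = (((L ^ 3 : ℝ) ^ (-(1/2 : ℝ)) : ℝ) : ℂ) * Efun L n x := rfl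

lemma Efun_mul (L : ℝ) (a b : Fin 3 → ℤ) (x : Fin 3 → ℝ) :
    Efun L a x * Efun L b x = Efun L (a + b) x := by
  unfold Efun
  rw [← Complex.exp_add]
  congr 1
  rw [← mul_add, ← Finset.sum_add_distrib]
  congr 1
  refine Finset.sum_congr rfl fun i _ => ?_
  simp only [Pi.add_apply, Int.cast_add]
  push_cast
  ring

lemma continuous_Efun (L : ℝ) (a : Fin 3 → ℤ) : Continuous (Efun L a) := by
  unfold Efun
  fun_prop

lemma measurableSet_Gam (L : ℝ) : MeasurableSet (TFW.Gam L) :=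
  MeasurableSet.univ_pi fun _ => measurableSet_Ico

lemma integrableOn_Gam {L : ℝ} {f : (Fin 3 → ℝ) → ℂ} (hf : Continuous f) :
    IntegrableOn f (TFW.Gam L) volume := by
  have h1 : IntegrableOn f (Set.univ.pi fun _ : Fin 3 => Set.Icc (0:ℝ) L) volume :=
    hf.continuousOn.integrableOn_compact (isCompact_univ_pi fun _ => isCompact_Icc)
  exact h1.mono_set (Set.pi_mono fun i _ => Set.Ico_subset_Icc_self)

lemma int_exp_Ico (L : ℝ) (hL : 0 < L) (n : ℤ) :
    ∫ x in Set.Ico (0:ℝ) L, Complex.exp (Complex.I * ((2*Real.pi/L : ℝ):ℂ) * (n:ℂ) * (x:ℂ)) =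
      if n = 0 then (L:ℂ) else 0 := by
  have h1 : ∫ x in Set.Ico (0:ℝ) L, Complex.exp (Complex.I * ((2*Real.pi/L : ℝ):ℂ) * (n:ℂ) * (x:ℂ))
      = ∫ x in (0:ℝ)..L, Complex.exp ((Complex.I * ((2*Real.pi/L : ℝ):ℂ) * (n:ℂ)) * (x:ℂ)) := by
    rw [MeasureTheory.restrict_Ico_eq_restrict_Ioc, intervalIntegral.integral_of_le hL.le]
  rw [h1]
  by_cases hn : n = 0
  · simp [hn, hL.le]
  · have hc : Complex.I * ((2*Real.pi/L : ℝ):ℂ) * (n:ℂ) ≠ 0 := by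
      apply mul_ne_zero (mul_ne_zero Complex.I_ne_zero _)
      · exact_mod_cast hn
      · simp only [ne_eq, Complex.ofReal_eq_zero]
        positivity
    rw [integral_exp_mul_complex hc]
    have : Complex.I * ((2*Real.pi/L : ℝ):ℂ) * (n:ℂ) * (L:ℂ) = (n:ℂ) * (2 * Real.pi * Complex.I) := by
      push_cast
      have hL' : (L:ℂ) ≠ 0 := by exact_mod_cast hL.ne'
      field_simp
    rw [this, Complex.exp_int_mul_two_pi_mul_I]
    simp [hn]

lemma int_Efun (L : ℝ) (hL : 0 < L) (n : Fin 3 → ℤ) :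
    ∫ x in TFW.Gam L, Efun L n x = if n = 0 then ((L:ℂ))^3 else 0 := by
  unfold Efun
  set g : Fin 3 → ℝ → ℂ := fun i y => Complex.exp (Complex.I * ((2*Real.pi/L : ℝ):ℂ) * (n i:ℂ) * (y:ℂ)) with hg
  have hsplit : ∀ x : Fin 3 → ℝ,
      Complex.exp (Complex.I * ((2*Real.pi/L : ℝ):ℂ) * ∑ i, (n i:ℂ) * ((x i : ℝ):ℂ))
        = ∏ i, g i (x i) := by
    intro x
    rw [hg, ← Complex.exp_sum]
    congr 1
    rw [Finset.mul_sum]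
    exact Finset.sum_congr rfl fun i _ => by ring
  simp_rw [hsplit]
  rw [← MeasureTheory.integral_indicator (measurableSet_Gam L)]
  have hind : (TFW.Gam L).indicator (fun x => ∏ i, g i (x i))
      = fun x => ∏ i, (Set.Ico (0:ℝ) L).indicator (g i) (x i) := by
    funext x
    by_cases hx : x ∈ TFW.Gam L
    · rw [Set.indicator_of_mem hx]
      exact Finset.prod_congr rfl fun i _ =>
        (Set.indicator_of_mem (hx i (Set.mem_univ i)) (g i)).symm
    · rw [Set.indicator_of_notMem hx]
      simp only [TFW.Gam, Set.mem_pi, Set.mem_univ, forall_true_left] at hx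
      push_neg at hx
      obtain ⟨i, hi⟩ := hx
      exact (Finset.prod_eq_zero (Finset.mem_univ i)
        (by rw [Set.indicator_of_notMem hi])).symm
  rw [hind, MeasureTheory.volume_pi, MeasureTheory.integral_fintype_prod_eq_prod (ι := Fin 3)
    (fun i => (Set.Ico (0:ℝ) L).indicator (g i))]
  have : ∀ i, (∫ y : ℝ, (Set.Ico (0:ℝ) L).indicator (g i) y)
      = if n i = 0 then (L:ℂ) else 0 := by
    intro i
    rw [MeasureTheory.integral_indicator measurableSet_Ico]
    exact int_exp_Ico L hL (n i)
  simp_rw [this]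
  by_cases h : n = 0
  · subst h
    simp
  · rw [if_neg h]
    obtain ⟨i, hi⟩ := Function.ne_iff.mp h
    exact Finset.prod_eq_zero (Finset.mem_univ i) (by simp only [Pi.zero_apply] at hi; simp [hi])

lemma dft_eq (L : ℝ) (Ng : ℕ) (φ : (Fin 3 → ℝ) → ℂ) (n : Fin 3 → ℤ) :
    TFW.dft L Ng φ n = ((Ng : ℂ) ^ 3)⁻¹ * ∑ m : Fin 3 → Fin Ng,
      φ (TFW.gridPt L Ng m) * Efun L (-n) (TFW.gridPt L Ng m) := by
  unfold TFW.dft Efun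
  congr 1
  refine Finset.sum_congr rfl fun m _ => ?_
  congr 1
  congr 1
  simp only [Pi.neg_apply, Int.cast_neg, neg_mul, Finset.sum_neg_distrib, mul_neg]

lemma mem_cube_of_knorm_le {L : ℝ} (hL : 0 < L) (N : ℕ) (n : Fin 3 → ℤ)
    (h : TFW.knorm L n ≤ 2 * Real.pi * N / L) : n ∈ TFW.cube N := by
  have hpos : (0:ℝ) < 2 * Real.pi / L := by positivity
  have h2 : Real.sqrt (TFW.zsq n) ≤ (N:ℝ) := by
    unfold TFW.knorm at h
    have hEq : 2 * Real.pi * N / L = (2 * Real.pi / L) * N := by ring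
    rw [hEq] at h
    exact le_of_mul_le_mul_left h hpos
  have h0 : (0:ℝ) ≤ TFW.zsq n := Finset.sum_nonneg fun i _ => sq_nonneg _
  have h3 : TFW.zsq n ≤ (N:ℝ)^2 := by
    nlinarith [Real.sq_sqrt h0, Real.sqrt_nonneg (TFW.zsq n)]
  rw [TFW.cube, Fintype.mem_piFinset]
  intro i
  rw [Finset.mem_Icc]
  have h4 : ((n i : ℝ))^2 ≤ (N:ℝ)^2 := by
    refine le_trans ?_ h3
    exact Finset.single_le_sum (f := fun j => ((n j : ℝ))^2) (fun j _ => sq_nonneg _)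
      (Finset.mem_univ i)
  have h5 : (n i)^2 ≤ (N:ℤ)^2 := by exact_mod_cast h4
  constructor <;> nlinarith

lemma support_in_ball {L : ℝ} (hL : 0 < L) {Nc : ℕ} {c : (Fin 3 → ℤ) → ℂ}
    (hc : ∀ n, 2 * Real.pi * Nc / L < TFW.knorm L n → c n = 0) :
    ∀ n ∉ TFW.ball L Nc, c n = 0 := by
  intro n hn
  by_cases hk : TFW.knorm L n ≤ 2 * Real.pi * Nc / L
  · exact absurd (Finset.mem_filter.mpr ⟨mem_cube_of_knorm_le hL Nc n hk, hk⟩) hn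
  · exact hc n (not_le.mp hk)

lemma fromCoeff_eq {L : ℝ} (hL : 0 < L) {Nc : ℕ} {c : (Fin 3 → ℤ) → ℂ}
    (hc : ∀ n, 2 * Real.pi * Nc / L < TFW.knorm L n → c n = 0) (x : Fin 3 → ℝ) :
    TFW.fromCoeff L c x = ∑ n ∈ TFW.ball L Nc, c n * TFW.ek L n x :=
  tsum_eq_sum fun n hn => by rw [support_in_ball hL hc n hn, zero_mul]

lemma neg_add_mem_interpModes {Nc Ng : ℕ} (hNg : 4 * Nc + 1 ≤ Ng) {L : ℝ}
    {p q : Fin 3 → ℤ} (hp : p ∈ TFW.ball L Nc) (hq : q ∈ TFW.ball L Nc) :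
    -(p + q) ∈ TFW.interpModes Ng := by
  have hp' := (Finset.mem_filter.mp hp).1
  have hq' := (Finset.mem_filter.mp hq).1
  rw [TFW.cube, Fintype.mem_piFinset] at hp' hq'
  rw [TFW.interpModes, TFW.cube, Fintype.mem_piFinset]
  intro i
  have h1 := Finset.mem_Icc.mp (hp' i)
  have h2 := Finset.mem_Icc.mp (hq' i)
  rw [Finset.mem_Icc]
  have hNg' : ((4 * Nc + 1 : ℕ) : ℤ) ≤ (Ng : ℤ) := by exact_mod_cast hNg
  push_cast at hNg'
  simp only [Pi.neg_apply, Pi.add_apply]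
  omega

lemma zero_mem_interpModes {Ng : ℕ} (hNg : 1 ≤ Ng) : (0 : Fin 3 → ℤ) ∈ TFW.interpModes Ng := by
  rw [TFW.interpModes, TFW.cube, Fintype.mem_piFinset]
  intro i
  rw [Finset.mem_Icc]
  have : (1 : ℤ) ≤ (Ng : ℤ) := by exact_mod_cast hNg
  simp only [Pi.zero_apply]
  omega

lemma const_fact (L : ℝ) (hL : 0 < L) :
    (((L ^ 3 : ℝ) ^ ((1/2 : ℝ)) : ℝ) : ℂ) * (((L ^ 3 : ℝ) ^ (-(1/2 : ℝ)) : ℝ) : ℂ) = 1 := by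
  have hL3 : (0:ℝ) < L ^ 3 := by positivity
  have hr : (L ^ 3 : ℝ) ^ ((1/2 : ℝ)) * (L ^ 3 : ℝ) ^ (-(1/2 : ℝ)) = 1 := by
    rw [← Real.rpow_add hL3]
    norm_num
  norm_cast

lemma const_fact2 (L : ℝ) (hL : 0 < L) :
    ((L:ℂ))^3 * (((L ^ 3 : ℝ) ^ (-(1/2 : ℝ)) : ℝ) : ℂ)^2 = 1 := by
  have hL3 : (0:ℝ) < L ^ 3 := by positivity
  have hr : (L:ℝ)^3 * ((L ^ 3 : ℝ) ^ (-(1/2 : ℝ)))^2 = 1 := by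
    have h2 : ((L ^ 3 : ℝ) ^ (-(1/2 : ℝ)))^(2:ℕ) = (L ^ 3 : ℝ) ^ (-(1:ℝ)) := by
      rw [← Real.rpow_natCast ((L ^ 3 : ℝ) ^ (-(1/2 : ℝ))) 2, ← Real.rpow_mul hL3.le]
      norm_num
    rw [h2, Real.rpow_neg_one]
    field_simp
  norm_cast

lemma const_fact3 (L : ℝ) (hL : 0 < L) :
    (((L ^ 3 : ℝ) ^ ((1/2 : ℝ)) : ℝ) : ℂ) * (((L ^ 3 : ℝ) ^ (-(1/2 : ℝ)) : ℝ) : ℂ)^3 * ((L:ℂ))^3 = 1 := by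
  have hL3 : (0:ℝ) < L ^ 3 := by positivity
  have hr : (L ^ 3 : ℝ) ^ ((1/2 : ℝ)) * ((L ^ 3 : ℝ) ^ (-(1/2 : ℝ)))^3 * (L:ℝ)^3 = 1 := by
    have h3 : ((L ^ 3 : ℝ) ^ (-(1/2 : ℝ)))^(3:ℕ) = (L ^ 3 : ℝ) ^ (-(3/2:ℝ)) := by
      rw [← Real.rpow_natCast ((L ^ 3 : ℝ) ^ (-(1/2 : ℝ))) 3, ← Real.rpow_mul hL3.le]
      norm_num
    rw [h3, ← Real.rpow_add hL3]
    norm_num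
    rw [Real.rpow_neg_one]
    field_simp
  norm_cast

lemma int_ek (L : ℝ) (hL : 0 < L) (n : Fin 3 → ℤ) :
    ∫ x in TFW.Gam L, TFW.ek L n x
      = (((L ^ 3 : ℝ) ^ (-(1/2 : ℝ)) : ℝ) : ℂ) * (if n = 0 then ((L:ℂ))^3 else 0) := by
  simp_rw [ek_eq]
  rw [MeasureTheory.integral_const_mul, int_Efun L hL n]

lemma integral_interp (L : ℝ) (hL : 0 < L) (Ng : ℕ) (hNg : 1 ≤ Ng) (φ : (Fin 3 → ℝ) → ℂ) :
    ∫ x in TFW.Gam L, TFW.interp L Ng φ x = ((L:ℂ))^3 * TFW.dft L Ng φ 0 := by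
  unfold TFW.interp
  rw [MeasureTheory.integral_const_mul]
  rw [MeasureTheory.integral_finset_sum _ (fun n _ =>
    (integrableOn_Gam (show Continuous fun x => TFW.dft L Ng φ n * TFW.ek L n x from
      (continuous_const.mul (continuous_const.mul (continuous_Efun L n))))))]
  have hterm : ∀ n ∈ TFW.interpModes Ng,
      (∫ x in TFW.Gam L, TFW.dft L Ng φ n * TFW.ek L n x)
        = TFW.dft L Ng φ n * ((((L ^ 3 : ℝ) ^ (-(1/2 : ℝ)) : ℝ) : ℂ) * (if n = 0 then ((L:ℂ))^3 else 0)) := by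
    intro n _
    rw [MeasureTheory.integral_const_mul, int_ek L hL n]
  rw [Finset.sum_congr rfl hterm]
  rw [Finset.sum_eq_single_of_mem 0 (zero_mem_interpModes hNg)
    (fun n _ hne => by rw [if_neg hne]; ring)]
  rw [if_pos rfl]
  linear_combination (TFW.dft L Ng φ 0 * ((L:ℂ))^3) * const_fact L hL


lemma Efun_zero (L : ℝ) (x : Fin 3 → ℝ) : Efun L 0 x = 1 := by
  unfold Efun
  simp

lemma integral_triple_sum (L : ℝ) (hL : 0 < L) {ι₁ ι₂ ι₃ : Type*}
    (s : Finset ι₁) (t : Finset ι₂) (u : Finset ι₃)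
    (K : ι₁ → ι₂ → ι₃ → ℂ) (a : ι₁ → ι₂ → ι₃ → Fin 3 → ℤ) :
    ∫ x in TFW.Gam L, (∑ m ∈ s, ∑ p ∈ t, ∑ q ∈ u, K m p q * Efun L (a m p q) x)
      = ∑ m ∈ s, ∑ p ∈ t, ∑ q ∈ u, K m p q * (if a m p q = 0 then ((L:ℂ))^3 else 0) := by
  rw [MeasureTheory.integral_finset_sum _ (fun m _ => integrableOn_Gam
    (continuous_finset_sum _ fun p _ => continuous_finset_sum _ fun q _ =>
      continuous_const.mul (continuous_Efun L _) : Continuous fun x =>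
        ∑ p ∈ t, ∑ q ∈ u, K m p q * Efun L (a m p q) x))]
  refine Finset.sum_congr rfl fun m _ => ?_
  rw [MeasureTheory.integral_finset_sum _ (fun p _ => integrableOn_Gam
    (continuous_finset_sum _ fun q _ => continuous_const.mul (continuous_Efun L _) :
      Continuous fun x => ∑ q ∈ u, K m p q * Efun L (a m p q) x))]
  refine Finset.sum_congr rfl fun p _ => ?_
  rw [MeasureTheory.integral_finset_sum _ (fun q _ => integrableOn_Gam
    (show Continuous fun x => K m p q * Efun L (a m p q) x from continuous_const.mul (continuous_Efun L _)))]
  refine Finset.sum_congr rfl fun q _ => ?_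
  rw [MeasureTheory.integral_const_mul, int_Efun L hL]


lemma mul_sum_sum {α β : Type*} (s : Finset α) (t : Finset β) (a : ℂ) (f : α → ℂ) (g : β → ℂ) :
    a * (∑ p ∈ s, f p) * (∑ q ∈ t, g q) = ∑ p ∈ s, ∑ q ∈ t, a * f p * g q := by
  rw [show a * (∑ p ∈ s, f p) = ∑ p ∈ s, a * f p from Finset.mul_sum _ _ _, Finset.sum_mul_sum]

lemma mul_sum_sum3 {α β γ : Type*} (s : Finset α) (t : Finset β) (u : Finset γ)
    (a : ℂ) (f : α → ℂ) (g : β → ℂ) (h : γ → ℂ) :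
    (a * ∑ m ∈ s, f m) * (∑ p ∈ t, g p) * (∑ q ∈ u, h q)
      = ∑ m ∈ s, ∑ p ∈ t, ∑ q ∈ u, a * f m * g p * h q := by
  rw [show a * (∑ m ∈ s, f m) = ∑ m ∈ s, a * f m from Finset.mul_sum _ _ _,
    show (∑ m ∈ s, a * f m) * (∑ p ∈ t, g p) = ∑ m ∈ s, ∑ p ∈ t, a * f m * g p from
      Finset.sum_mul_sum _ _ _ _,
    Finset.sum_mul]
  exact Finset.sum_congr rfl fun m _ => by rw [Finset.sum_mul_sum]

end Stmt4Aux

/-- ∫ I_{N_g}(V v w) = ∫ I_{N_g}(V) v w for v, w ∈ V_{N_c}, N_g ≥ 4N_c+1. -/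
theorem stmt4 (L : ℝ) (hL : 0 < L) (Nc Ng : ℕ) (hNg : 4 * Nc + 1 ≤ Ng) (hodd : Odd Ng)
    (V : (Fin 3 → ℝ) → ℝ) (hVcont : Continuous V)
    (hVper : ∀ (x : Fin 3 → ℝ) (p : Fin 3 → ℤ), V (fun i => x i + L * (p i : ℝ)) = V x)
    (cv cw : (Fin 3 → ℤ) → ℂ)
    (hv : ∀ n, 2 * Real.pi * Nc / L < TFW.knorm L n → cv n = 0)
    (hw : ∀ n, 2 * Real.pi * Nc / L < TFW.knorm L n → cw n = 0)
    (hvreal : ∀ n, cv (-n) = (starRingEnd ℂ) (cv n))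
    (hwreal : ∀ n, cw (-n) = (starRingEnd ℂ) (cw n)) :
    ∫ x in TFW.Gam L,
        TFW.interp L Ng (fun y => (V y : ℂ) * TFW.fromCoeff L cv y * TFW.fromCoeff L cw y) x =
      ∫ x in TFW.Gam L,
        TFW.interp L Ng (fun y => (V y : ℂ)) x * TFW.fromCoeff L cv x * TFW.fromCoeff L cw x := by
  have hNg1 : 1 ≤ Ng := by omega
  have hvsum := fromCoeff_eq hL hv
  have hwsum := fromCoeff_eq hL hw
  set c1c : ℂ := (((L ^ 3 : ℝ) ^ ((1/2 : ℝ)) : ℝ) : ℂ) with hc1c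
  set c0c : ℂ := (((L ^ 3 : ℝ) ^ (-(1/2 : ℝ)) : ℝ) : ℂ) with hc0c
  have hphi : ∀ m : Fin 3 → Fin Ng,
      (V (TFW.gridPt L Ng m) : ℂ) * TFW.fromCoeff L cv (TFW.gridPt L Ng m) *
          TFW.fromCoeff L cw (TFW.gridPt L Ng m)
        = ∑ p ∈ TFW.ball L Nc, ∑ q ∈ TFW.ball L Nc, cv p * cw q *
            (c0c ^ 2 * ((V (TFW.gridPt L Ng m) : ℂ) * Efun L (p + q) (TFW.gridPt L Ng m))) := by
    intro m
    rw [hvsum, hwsum, mul_sum_sum]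
    refine Finset.sum_congr rfl fun p _ => Finset.sum_congr rfl fun q _ => ?_
    simp only [ek_eq, ← hc0c]
    have e1 := Efun_mul L p q (TFW.gridPt L Ng m)
    linear_combination ((V (TFW.gridPt L Ng m) : ℂ) * cv p * cw q * c0c ^ 2) * e1
  have hL1 : (∫ x in TFW.Gam L,
        TFW.interp L Ng (fun y => (V y : ℂ) * TFW.fromCoeff L cv y * TFW.fromCoeff L cw y) x)
      = ∑ p ∈ TFW.ball L Nc, ∑ q ∈ TFW.ball L Nc, cv p * cw q *
          (((Ng:ℂ)^3)⁻¹ * ∑ m : Fin 3 → Fin Ng,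
            ((V (TFW.gridPt L Ng m)) : ℂ) * Efun L (p + q) (TFW.gridPt L Ng m)) := by
    rw [integral_interp L hL Ng hNg1, dft_eq, neg_zero]
    simp only [Efun_zero, mul_one]
    rw [Finset.sum_congr rfl (fun m (_ : m ∈ Finset.univ) => hphi m)]
    simp only [Finset.mul_sum]
    conv_lhs => rw [Finset.sum_comm]
    refine Finset.sum_congr rfl fun p _ => ?_
    conv_lhs => rw [Finset.sum_comm]
    refine Finset.sum_congr rfl fun q _ => Finset.sum_congr rfl fun m _ => ?_
    linear_combination (cv p * cw q * ((Ng:ℂ)^3)⁻¹ *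
      (((V (TFW.gridPt L Ng m)) : ℂ) * Efun L (p + q) (TFW.gridPt L Ng m))) * const_fact2 L hL
  have hx : ∀ x : Fin 3 → ℝ,
      TFW.interp L Ng (fun y => (V y : ℂ)) x * TFW.fromCoeff L cv x * TFW.fromCoeff L cw x
        = ∑ m ∈ TFW.interpModes Ng, ∑ p ∈ TFW.ball L Nc, ∑ q ∈ TFW.ball L Nc,
            (c1c * TFW.dft L Ng (fun y => (V y : ℂ)) m * (cv p * cw q) * c0c ^ 3) *
              Efun L (m + (p + q)) x := by
    intro x
    rw [hvsum x, hwsum x]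
    unfold TFW.interp
    rw [mul_sum_sum3]
    refine Finset.sum_congr rfl fun m _ => Finset.sum_congr rfl fun p _ =>
      Finset.sum_congr rfl fun q _ => ?_
    simp only [ek_eq, ← hc0c, ← hc1c]
    have e1 := Efun_mul L p q x
    have e2 := Efun_mul L m (p + q) x
    linear_combination (c1c * TFW.dft L Ng (fun y => (V y : ℂ)) m * cv p * cw q * c0c ^ 3) * e2
      + (c1c * TFW.dft L Ng (fun y => (V y : ℂ)) m * cv p * cw q * c0c ^ 3 * Efun L m x) * e1
  have hR1 : (∫ x in TFW.Gam L,
        TFW.interp L Ng (fun y => (V y : ℂ)) x * TFW.fromCoeff L cv x * TFW.fromCoeff L cw x)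
      = ∑ p ∈ TFW.ball L Nc, ∑ q ∈ TFW.ball L Nc, cv p * cw q *
          (((Ng:ℂ)^3)⁻¹ * ∑ m : Fin 3 → Fin Ng,
            ((V (TFW.gridPt L Ng m)) : ℂ) * Efun L (p + q) (TFW.gridPt L Ng m)) := by
    simp only [hx]
    have hmid := integral_triple_sum L hL (TFW.interpModes Ng) (TFW.ball L Nc) (TFW.ball L Nc)
      (fun m p q => c1c * TFW.dft L Ng (fun y => (V y : ℂ)) m * (cv p * cw q) * c0c ^ 3)
      (fun m p q => m + (p + q))
    rw [hmid]
    conv_lhs => rw [Finset.sum_comm]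
    refine Finset.sum_congr rfl fun p hp => ?_
    conv_lhs => rw [Finset.sum_comm]
    refine Finset.sum_congr rfl fun q hq => ?_
    have hc : ∀ m ∈ TFW.interpModes Ng,
        c1c * TFW.dft L Ng (fun y => (V y : ℂ)) m * (cv p * cw q) * c0c ^ 3 *
            (if m + (p + q) = 0 then ((L:ℂ))^3 else 0)
          = if m = -(p + q) then
              c1c * TFW.dft L Ng (fun y => (V y : ℂ)) m * (cv p * cw q) * c0c ^ 3 * ((L:ℂ))^3
            else 0 := by
      intro m _
      by_cases hm : m = -(p + q)
      · rw [if_pos hm, if_pos (by rw [hm]; exact neg_add_cancel _)]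
      · rw [if_neg hm, if_neg (fun h => hm (eq_neg_of_add_eq_zero_left h)), mul_zero]
    rw [Finset.sum_congr rfl hc, Finset.sum_ite_eq' (TFW.interpModes Ng) (-(p + q)),
      if_pos (neg_add_mem_interpModes hNg hp hq), dft_eq, neg_neg]
    linear_combination (cv p * cw q * ((Ng:ℂ)^3)⁻¹ *
      (∑ m : Fin 3 → Fin Ng, ((V (TFW.gridPt L Ng m)) : ℂ) * Efun L (p + q) (TFW.gridPt L Ng m)))
        * const_fact3 L hL
  rw [hL1, hR1]
end
end

section
/- Let N_g ≥ 4N_c+1 and s > 3/2, and let V ∈ H^s_#(Γ). Then ‖Π_{2N_c}(I_{N_g}(V))‖_{L²_#} ≤ (∫_Γ I_{N_g}(|V|²))^{1/2}. -/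
open MeasureTheory

noncomputable section

namespace TFW
open MeasureTheory Complex

lemma continuous_ek {L : ℝ} (n : Fin 3 → ℤ) : Continuous (ek L n) := by
  unfold ek
  fun_prop

lemma integrableOn_Gam {L : ℝ} {f : (Fin 3 → ℝ) → ℂ} (hf : Continuous f) :
    IntegrableOn f (Gam L) := by
  have hK : IsCompact (Set.univ.pi fun _ : Fin 3 => Set.Icc (0:ℝ) L) :=
    isCompact_univ_pi fun _ => isCompact_Icc
  refine (hf.continuousOn.integrableOn_compact hK).mono_set ?_
  intro x hx i _
  exact Set.Ico_subset_Icc_self (hx i trivial)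

lemma mul_conj_eq {z : ℂ} : z * (starRingEnd ℂ) z = ((‖z‖^2 : ℝ) : ℂ) := by
  rw [Complex.mul_conj, Complex.normSq_eq_norm_sq]

lemma integral_Ico_exp {L : ℝ} (hL : 0 < L) (a : ℤ) :
    ∫ t in Set.Ico (0:ℝ) L, Complex.exp (Complex.I * ((2*Real.pi/L : ℝ):ℂ) * (a:ℂ) * (t:ℂ))
      = if a = 0 then (L:ℂ) else 0 := by
  rcases eq_or_ne a 0 with h | h
  · simp [h, Real.volume_Ico, hL.le]
  · rw [if_neg h]
    set c : ℂ := Complex.I * ((2*Real.pi/L : ℝ):ℂ) * (a:ℂ) with hc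
    have hc0 : c ≠ 0 := by
      apply mul_ne_zero (mul_ne_zero Complex.I_ne_zero ?_) ?_
      · simp only [ne_eq, Complex.ofReal_eq_zero]
        positivity
      · exact_mod_cast h
    have : ∫ t in Set.Ico (0:ℝ) L, Complex.exp (c * (t:ℂ)) = ∫ t in (0:ℝ)..L, Complex.exp (c * t) := by
      rw [intervalIntegral.integral_of_le hL.le, setIntegral_congr_set Ico_ae_eq_Ioc]
    rw [this, integral_exp_mul_complex hc0]
    have h1 : c * (L:ℂ) = (a:ℂ) * (2*Real.pi*Complex.I) := by
      rw [hc]; push_cast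
      have hL0 : (L:ℂ) ≠ 0 := by exact_mod_cast hL.ne'
      field_simp
    rw [h1, Complex.exp_int_mul_two_pi_mul_I]
    simp

lemma integral_pi_prod {L : ℝ} (f : Fin 3 → ℝ → ℂ) :
    ∫ x in Set.univ.pi (fun _ : Fin 3 => Set.Ico (0:ℝ) L), ∏ i, f i (x i)
      = ∏ i, ∫ t in Set.Ico (0:ℝ) L, f i t := by
  have hs : MeasurableSet (Set.univ.pi (fun _ : Fin 3 => Set.Ico (0:ℝ) L)) :=
    MeasurableSet.univ_pi fun _ => measurableSet_Ico
  rw [← integral_indicator hs]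
  have : ∀ x : Fin 3 → ℝ, (Set.univ.pi (fun _ : Fin 3 => Set.Ico (0:ℝ) L)).indicator
      (fun x => ∏ i, f i (x i)) x = ∏ i, (Set.Ico (0:ℝ) L).indicator (f i) (x i) := by
    intro x
    by_cases hx : x ∈ Set.univ.pi (fun _ : Fin 3 => Set.Ico (0:ℝ) L)
    · rw [Set.indicator_of_mem hx]
      exact Finset.prod_congr rfl fun i _ => (Set.indicator_of_mem (hx i (Set.mem_univ i)) _).symm
    · rw [Set.indicator_of_notMem hx]
      rw [Set.mem_pi] at hx
      push_neg at hx
      obtain ⟨i, _, hi⟩ := hx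
      exact (Finset.prod_eq_zero (Finset.mem_univ i) (Set.indicator_of_notMem hi _)).symm
  simp_rw [this]
  rw [MeasureTheory.integral_fintype_prod_volume_eq_prod (fun i t => (Set.Ico (0:ℝ) L).indicator (f i) t)]
  exact Finset.prod_congr rfl fun i _ => integral_indicator measurableSet_Ico

lemma ek_mul_conj {L : ℝ} (n m : Fin 3 → ℤ) (x : Fin 3 → ℝ) :
    ek L n x * (starRingEnd ℂ) (ek L m x)
      = ((((L^3:ℝ)^(-(1/2:ℝ)) * (L^3:ℝ)^(-(1/2:ℝ)) : ℝ)):ℂ) *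
        ∏ i, Complex.exp (Complex.I * ((2*Real.pi/L:ℝ):ℂ) * ((n i - m i : ℤ):ℂ) * ((x i : ℝ):ℂ)) := by
  unfold ek
  rw [map_mul, ← Complex.exp_conj]
  have hconj : (starRingEnd ℂ) (Complex.I * ((2*Real.pi/L:ℝ):ℂ) * ∑ i, (m i:ℂ)*(x i:ℂ))
      = -(Complex.I * ((2*Real.pi/L:ℝ):ℂ) * ∑ i, (m i:ℂ)*(x i:ℂ)) := by
    simp only [map_mul, map_sum, Complex.conj_I, Complex.conj_ofReal, map_intCast]
    ring
  rw [hconj, Complex.conj_ofReal, mul_mul_mul_comm, ← Complex.exp_add, ← Complex.ofReal_mul,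
    ← Complex.exp_sum]
  congr 2
  rw [← sub_eq_add_neg, ← mul_sub, ← Finset.sum_sub_distrib, Finset.mul_sum]
  refine Finset.sum_congr rfl fun i _ => ?_
  push_cast
  ring

lemma integral_ek_mul_conj {L : ℝ} (hL : 0 < L) (n m : Fin 3 → ℤ) :
    ∫ x in Gam L, ek L n x * (starRingEnd ℂ) (ek L m x) = if n = m then 1 else 0 := by
  have hco : ((L^3:ℝ)^(-(1/2:ℝ)) * (L^3:ℝ)^(-(1/2:ℝ)) : ℝ) = (L^3)⁻¹ := by
    rw [← Real.rpow_add (by positivity)]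
    norm_num
    exact (Real.rpow_neg_one _)
  simp_rw [ek_mul_conj n m, integral_const_mul]
  rw [show Gam L = Set.univ.pi fun _ : Fin 3 => Set.Ico (0:ℝ) L from rfl]
  rw [integral_pi_prod (fun i t => Complex.exp (Complex.I * ((2*Real.pi/L:ℝ):ℂ) * ((n i - m i : ℤ):ℂ) * (t:ℂ)))]
  have h2 : ∀ i : Fin 3, (∫ t in Set.Ico (0:ℝ) L,
      Complex.exp (Complex.I * ((2*Real.pi/L:ℝ):ℂ) * ((n i - m i : ℤ):ℂ) * (t:ℂ)))
      = if n i - m i = 0 then (L:ℂ) else 0 := fun i => integral_Ico_exp hL (n i - m i)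
  simp_rw [h2, hco]
  by_cases h : n = m
  · simp only [h, sub_self, if_pos rfl, if_true, Finset.prod_const, Finset.card_univ, Fintype.card_fin]
    rw [show ((L:ℂ)^3) = ((L^3:ℝ):ℂ) by push_cast; ring,
      ← Complex.ofReal_mul, inv_mul_cancel₀ (by positivity : (L:ℝ)^3 ≠ 0), Complex.ofReal_one]
  · rw [if_neg h]
    obtain ⟨i, hi⟩ := Function.ne_iff.mp h
    rw [Finset.prod_eq_zero (Finset.mem_univ i) (by rw [if_neg (sub_ne_zero.mpr hi)]), mul_zero]

lemma integral_ek {L : ℝ} (hL : 0 < L) (n : Fin 3 → ℤ) :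
    ∫ x in Gam L, ek L n x = if n = 0 then ((((L^3:ℝ)^((1/2:ℝ)) : ℝ)):ℂ) else 0 := by
  have hpt : ∀ x : Fin 3 → ℝ, ek L n x = (((L^3:ℝ)^(-(1/2:ℝ)) : ℝ):ℂ) *
      ∏ i, Complex.exp (Complex.I * ((2*Real.pi/L:ℝ):ℂ) * ((n i : ℤ):ℂ) * ((x i : ℝ):ℂ)) := by
    intro x
    unfold ek
    rw [← Complex.exp_sum]
    congr 1
    rw [Finset.mul_sum]
    exact congrArg Complex.exp (Finset.sum_congr rfl fun i _ => by push_cast; ring)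
  simp_rw [hpt, integral_const_mul]
  rw [show Gam L = Set.univ.pi fun _ : Fin 3 => Set.Ico (0:ℝ) L from rfl]
  rw [integral_pi_prod (fun i t => Complex.exp (Complex.I * ((2*Real.pi/L:ℝ):ℂ) * ((n i : ℤ):ℂ) * (t:ℂ)))]
  simp_rw [fun i : Fin 3 => integral_Ico_exp hL (n i)]
  by_cases h : n = 0
  · rw [if_pos h]
    have h0 : ∀ i : Fin 3, n i = 0 := fun i => congrFun h i
    simp only [h0, if_pos rfl, if_true, Finset.prod_const, Finset.card_univ, Fintype.card_fin]
    rw [show ((L:ℂ)^3) = ((L^3:ℝ):ℂ) by push_cast; ring, ← Complex.ofReal_mul]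
    congr 1
    nth_rewrite 2 [← Real.rpow_one ((L:ℝ)^3)]
    rw [← Real.rpow_add (by positivity)]
    norm_num
  · rw [if_neg h]
    obtain ⟨i, hi⟩ := Function.ne_iff.mp h
    rw [Finset.prod_eq_zero (Finset.mem_univ i) (by rw [if_neg (by simpa using hi)]), mul_zero]

lemma sum_exp_Icc {N : ℕ} {k : ℕ} (hk : (N:ℤ) = 2*(k:ℤ)+1) (d : ℤ) (hd : d.natAbs < N) :
    ∑ t ∈ Finset.Icc (-(k:ℤ)) (k:ℤ),
      Complex.exp (Complex.I * ((2*Real.pi/(N:ℝ)):ℂ) * (t:ℂ) * (d:ℂ))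
      = if d = 0 then (N:ℂ) else 0 := by
  have hN0 : 0 < N := by omega
  set z : ℂ := Complex.exp (Complex.I * ((2*Real.pi/(N:ℝ)):ℂ) * (d:ℂ)) with hz
  have hterm : ∀ t : ℤ, Complex.exp (Complex.I * ((2*Real.pi/(N:ℝ)):ℂ) * (t:ℂ) * (d:ℂ)) = z ^ t := by
    intro t
    rw [hz, ← Complex.exp_int_mul]
    congr 1
    ring
  simp_rw [hterm]
  rcases eq_or_ne d 0 with h | h
  · simp only [h, if_pos rfl]
    have hz1 : z = 1 := by rw [hz]; simp [h]
    simp only [hz1, one_zpow, Finset.sum_const, nsmul_eq_mul, mul_one]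
    rw [Int.card_Icc]
    have h3 : ((k:ℤ) + 1 - -(k:ℤ)).toNat = N := by omega
    rw [h3]
    simp
  · rw [if_neg h]
    have hzne : z ≠ 0 := Complex.exp_ne_zero _
    have hzN : z ^ (N:ℕ) = 1 := by
      rw [hz, ← Complex.exp_nat_mul]
      have : (N:ℂ) * (Complex.I * ((2*Real.pi/(N:ℝ)):ℂ) * (d:ℂ)) = (d:ℂ) * (2*Real.pi*Complex.I) := by
        have hNc : ((N:ℕ):ℂ) ≠ 0 := Nat.cast_ne_zero.mpr (by omega)
        push_cast
        field_simp
      rw [this, Complex.exp_int_mul_two_pi_mul_I]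
    have hz1 : z ≠ 1 := by
      intro hz1
      rw [hz, Complex.exp_eq_one_iff] at hz1
      obtain ⟨j, hj⟩ := hz1
      push_cast at hj
      have hNc : ((N:ℕ):ℂ) ≠ 0 := Nat.cast_ne_zero.mpr (by omega)
      have h2pi : (2*(Real.pi:ℂ)) ≠ 0 :=
        mul_ne_zero two_ne_zero (Complex.ofReal_ne_zero.mpr Real.pi_ne_zero)
      have hcan : (Complex.I * (2*(Real.pi:ℂ)) / (N:ℂ)) ≠ 0 :=
        div_ne_zero (mul_ne_zero Complex.I_ne_zero h2pi) hNc
      have hdc : (d:ℂ) = (j:ℂ)*(N:ℂ) := by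
        apply mul_left_cancel₀ hcan
        rw [show Complex.I * (2*(Real.pi:ℂ)) / (N:ℂ) * (d:ℂ)
            = Complex.I * (2*(Real.pi:ℂ)/(N:ℂ)) * (d:ℂ) by ring, hj]
        field_simp
      have hdZ : d = j * N := by exact_mod_cast hdc
      have : (N:ℤ) ∣ d := ⟨j, by rw [hdZ, mul_comm]⟩
      have hle : (N:ℕ) ≤ d.natAbs := by
        have := Int.natAbs_dvd_natAbs.mpr this
        simpa using Nat.le_of_dvd (Int.natAbs_pos.mpr h) this
      omega
    have reindex : ∑ t ∈ Finset.Icc (-(k:ℤ)) (k:ℤ), z ^ t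
        = z ^ (-(k:ℤ)) * ∑ a ∈ Finset.range N, z ^ a := by
      rw [Finset.mul_sum]
      refine (Finset.sum_bij' (fun (a : ℕ) _ => (a:ℤ) - k) (fun (t : ℤ) _ => (t + k).toNat)
        ?_ ?_ ?_ ?_ ?_).symm
      · intro a ha
        simp only [Finset.mem_range] at ha
        simp only [Finset.mem_Icc]
        omega
      · intro t ht
        simp only [Finset.mem_Icc] at ht
        simp only [Finset.mem_range]
        omega
      · intro a ha
        simp only [Finset.mem_range] at ha
        omega
      · intro t ht
        simp only [Finset.mem_Icc] at ht
        omega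
      · intro a ha
        rw [← zpow_natCast z a, ← zpow_add₀ hzne]
        congr 1
        ring
    rw [reindex]
    have : ∑ a ∈ Finset.range N, z ^ a = 0 := by
      rw [geom_sum_eq hz1, hzN, sub_self, zero_div]
    rw [this, mul_zero]

lemma parseval {L : ℝ} (hL : 0 < L) {Ng k : ℕ} (hk : (Ng:ℤ) = 2*(k:ℤ)+1)
    (φ : (Fin 3 → ℝ) → ℂ) :
    ∑ n ∈ cube (k:ℤ), dft L Ng φ n * (starRingEnd ℂ) (dft L Ng φ n)
      = ((Ng:ℂ)^3)⁻¹ * ∑ m : Fin 3 → Fin Ng,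
          φ (gridPt L Ng m) * (starRingEnd ℂ) (φ (gridPt L Ng m)) := by
  classical
  have hNg0 : 0 < Ng := by omega
  have hNgC : ((Ng:ℕ):ℂ) ≠ 0 := Nat.cast_ne_zero.mpr (by omega)
  have hLC : (L:ℂ) ≠ 0 := by exact_mod_cast hL.ne'
  have key : ∀ n : Fin 3 → ℤ, dft L Ng φ n * (starRingEnd ℂ) (dft L Ng φ n)
      = (((Ng:ℂ)^3)⁻¹ * ((Ng:ℂ)^3)⁻¹) * ∑ m : Fin 3 → Fin Ng, ∑ m' : Fin 3 → Fin Ng,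
        (φ (gridPt L Ng m) * (starRingEnd ℂ) (φ (gridPt L Ng m'))) *
          ∏ i, Complex.exp (Complex.I * ((2*Real.pi/(Ng:ℝ)):ℂ) * ((n i):ℂ)
            * ((((m' i : ℤ) - (m i : ℤ) : ℤ)):ℂ)) := by
    intro n
    unfold dft
    rw [map_mul]
    have hC : (starRingEnd ℂ) (((Ng:ℂ)^3)⁻¹) = ((Ng:ℂ)^3)⁻¹ := by
      simp
    rw [hC, map_sum, mul_mul_mul_comm]
    congr 1
    rw [Finset.sum_mul_sum]
    refine Finset.sum_congr rfl fun m _ => Finset.sum_congr rfl fun m' _ => ?_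
    rw [map_mul, mul_mul_mul_comm]
    congr 1
    rw [← Complex.exp_conj, ← Complex.exp_add, ← Complex.exp_sum]
    congr 1
    have hconj : (starRingEnd ℂ) (-(Complex.I * ((2 * Real.pi / L : ℝ) : ℂ) *
        ∑ i, (n i : ℂ) * ((gridPt L Ng m' i : ℝ) : ℂ)))
        = Complex.I * ((2 * Real.pi / L : ℝ) : ℂ) * ∑ i, (n i : ℂ) * ((gridPt L Ng m' i : ℝ) : ℂ) := by
      rw [map_neg, map_mul, map_mul, Complex.conj_I, Complex.conj_ofReal, map_sum]
      simp_rw [map_mul, map_intCast, Complex.conj_ofReal]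
      ring
    rw [hconj, neg_add_eq_sub, ← mul_sub, ← Finset.sum_sub_distrib, Finset.mul_sum]
    refine Finset.sum_congr rfl fun i _ => ?_
    simp only [gridPt]
    push_cast
    field_simp
  simp_rw [key]
  rw [← Finset.mul_sum]
  rw [Finset.sum_comm]
  have hswap : ∀ m : Fin 3 → Fin Ng,
      ∑ n ∈ cube (k:ℤ), ∑ m' : Fin 3 → Fin Ng,
        (φ (gridPt L Ng m) * (starRingEnd ℂ) (φ (gridPt L Ng m'))) *
          ∏ i, Complex.exp (Complex.I * ((2*Real.pi/(Ng:ℝ)):ℂ) * ((n i):ℂ)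
            * ((((m' i : ℤ) - (m i : ℤ) : ℤ)):ℂ))
      = (φ (gridPt L Ng m) * (starRingEnd ℂ) (φ (gridPt L Ng m))) * (Ng:ℂ)^3 := by
    intro m
    rw [Finset.sum_comm]
    have inner : ∀ m' : Fin 3 → Fin Ng,
        ∑ n ∈ cube (k:ℤ), ∏ i, Complex.exp (Complex.I * ((2*Real.pi/(Ng:ℝ)):ℂ) * ((n i):ℂ)
            * ((((m' i : ℤ) - (m i : ℤ) : ℤ)):ℂ))
        = if m' = m then ((Ng:ℕ):ℂ)^3 else 0 := by
      intro m'
      rw [show cube (k:ℤ) = Fintype.piFinset (fun _ : Fin 3 => Finset.Icc (-(k:ℤ)) (k:ℤ)) from rfl]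
      rw [← Finset.prod_univ_sum (fun _ : Fin 3 => Finset.Icc (-(k:ℤ)) (k:ℤ))
        (fun i t => Complex.exp (Complex.I * ((2*Real.pi/(Ng:ℝ)):ℂ) * (t:ℂ)
          * ((((m' i : ℤ) - (m i : ℤ) : ℤ)):ℂ)))]
      have hcoord : ∀ i : Fin 3,
          ∑ t ∈ Finset.Icc (-(k:ℤ)) (k:ℤ),
            Complex.exp (Complex.I * ((2*Real.pi/(Ng:ℝ)):ℂ) * (t:ℂ)
              * ((((m' i : ℤ) - (m i : ℤ) : ℤ)):ℂ))
          = if ((m' i : ℤ) - (m i : ℤ) : ℤ) = 0 then ((Ng:ℕ):ℂ) else 0 := by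
        intro i
        exact sum_exp_Icc hk _ (by
          have := (m i).is_lt
          have := (m' i).is_lt
          omega)
      simp_rw [hcoord]
      by_cases h : m' = m
      · subst h
        simp only [sub_self, if_pos rfl, if_true, Finset.prod_const, Finset.card_univ,
          Fintype.card_fin]
      · rw [if_neg h]
        obtain ⟨i, hi⟩ := Function.ne_iff.mp h
        refine Finset.prod_eq_zero (Finset.mem_univ i) ?_
        rw [if_neg]
        intro hc
        apply hi
        have : (m' i : ℤ) = (m i : ℤ) := by omega
        exact Fin.ext (by exact_mod_cast this)
    have step : ∀ m' : Fin 3 → Fin Ng,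
        ∑ n ∈ cube (k:ℤ), (φ (gridPt L Ng m) * (starRingEnd ℂ) (φ (gridPt L Ng m'))) *
          ∏ i, Complex.exp (Complex.I * ((2*Real.pi/(Ng:ℝ)):ℂ) * ((n i):ℂ)
            * ((((m' i : ℤ) - (m i : ℤ) : ℤ)):ℂ))
        = if m' = m then
            (φ (gridPt L Ng m) * (starRingEnd ℂ) (φ (gridPt L Ng m'))) * ((Ng:ℕ):ℂ)^3 else 0 := by
      intro m'
      rw [← Finset.mul_sum, inner m']
      split_ifs with h
      · rfl
      · rw [mul_zero]
    simp_rw [step]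
    rw [Finset.sum_ite_eq' Finset.univ m]
    simp
  simp_rw [hswap]
  field_simp
  rw [Finset.mul_sum]
  exact Finset.sum_congr rfl fun _ _ => by ring

end TFW

/-- ‖Π_{2N_c}(I_{N_g}(V))‖_{L²} ≤ (∫ I_{N_g}(|V|²))^{1/2}. -/
theorem stmt6 (L : ℝ) (hL : 0 < L) (Nc Ng : ℕ) (hNg : 4 * Nc + 1 ≤ Ng) (hodd : Odd Ng)
    (V : (Fin 3 → ℝ) → ℝ) (hVcont : Continuous V)
    (hVper : ∀ (x : Fin 3 → ℝ) (p : Fin 3 → ℤ), V (fun i => x i + L * (p i : ℝ)) = V x) :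
    Real.sqrt (∫ x in TFW.Gam L, ‖TFW.truncInterp L Ng Nc (fun y => (V y : ℂ)) x‖ ^ 2) ≤
      Real.sqrt ((∫ x in TFW.Gam L, TFW.interp L Ng (fun y => ((V y ^ 2 : ℝ) : ℂ)) x).re) := by
  classical
  obtain ⟨k, hkNg⟩ := hodd
  have hkZ : (Ng:ℤ) = 2*(k:ℤ)+1 := by exact_mod_cast hkNg
  have hNgpos : (0:ℝ) < (Ng:ℝ) := by exact_mod_cast (by omega : 0 < Ng)
  have hC2 : ((L^3:ℝ)^((1/2:ℝ)):ℝ) * ((L^3:ℝ)^((1/2:ℝ)):ℝ) = L^3 := by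
    rw [← Real.rpow_add (by positivity)]
    norm_num
  -- LHS computation
  have hlhs : (∫ x in TFW.Gam L, ‖TFW.truncInterp L Ng Nc (fun y => (V y : ℂ)) x‖ ^ 2)
      = L^3 * ∑ n ∈ TFW.ball L (2*Nc), ‖TFW.dft L Ng (fun y => (V y : ℂ)) n‖^2 := by
    set c : (Fin 3 → ℤ) → ℂ := TFW.dft L Ng (fun y => (V y : ℂ)) with hc
    set S : Finset (Fin 3 → ℤ) := TFW.ball L (2*Nc) with hS
    have hKp : ∀ p : (Fin 3 → ℤ) × (Fin 3 → ℤ), Continuous (fun x =>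
        (((((L^3:ℝ)^((1/2:ℝ)):ℝ):ℂ) * c p.1) * ((((L^3:ℝ)^((1/2:ℝ)):ℝ):ℂ) * (starRingEnd ℂ) (c p.2))) *
          (TFW.ek L p.1 x * (starRingEnd ℂ) (TFW.ek L p.2 x))) := by
      intro p
      apply continuous_const.mul
      exact (TFW.continuous_ek p.1).mul (Complex.continuous_conj.comp (TFW.continuous_ek p.2))
    have hpt : ∀ x, ((‖TFW.truncInterp L Ng Nc (fun y => (V y : ℂ)) x‖^2 : ℝ) : ℂ)
        = ∑ p ∈ S ×ˢ S, (((((L^3:ℝ)^((1/2:ℝ)):ℝ):ℂ) * c p.1) * ((((L^3:ℝ)^((1/2:ℝ)):ℝ):ℂ) * (starRingEnd ℂ) (c p.2))) *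
            (TFW.ek L p.1 x * (starRingEnd ℂ) (TFW.ek L p.2 x)) := by
      intro x
      rw [← TFW.mul_conj_eq]
      have hz : TFW.truncInterp L Ng Nc (fun y => (V y : ℂ)) x
          = ∑ n ∈ S, ((((L^3:ℝ)^((1/2:ℝ)):ℝ):ℂ) * c n) * TFW.ek L n x := by
        rw [show TFW.truncInterp L Ng Nc (fun y => (V y : ℂ)) x
            = ((((L^3:ℝ)^((1/2:ℝ)):ℝ):ℂ)) * ∑ n ∈ S, c n * TFW.ek L n x from rfl, Finset.mul_sum]
        exact Finset.sum_congr rfl fun n _ => by ring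
      rw [hz, map_sum, Finset.sum_mul_sum, Finset.sum_product]
      refine Finset.sum_congr rfl fun n _ => Finset.sum_congr rfl fun m _ => ?_
      rw [map_mul, map_mul, Complex.conj_ofReal]
      ring
    have hInt : ((∫ x in TFW.Gam L, ‖TFW.truncInterp L Ng Nc (fun y => (V y : ℂ)) x‖^2 : ℝ) : ℂ)
        = ∑ p ∈ S ×ˢ S, (((((L^3:ℝ)^((1/2:ℝ)):ℝ):ℂ) * c p.1) * ((((L^3:ℝ)^((1/2:ℝ)):ℝ):ℂ) * (starRingEnd ℂ) (c p.2))) *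
            (if p.1 = p.2 then 1 else 0) := by
      have hIR : ∫ x in TFW.Gam L, ((‖TFW.truncInterp L Ng Nc (fun y => (V y : ℂ)) x‖^2 : ℝ) : ℂ)
          = ((∫ x in TFW.Gam L, ‖TFW.truncInterp L Ng Nc (fun y => (V y : ℂ)) x‖^2 : ℝ) : ℂ) :=
        integral_ofReal
      rw [← hIR]
      simp_rw [hpt]
      rw [integral_finset_sum _ (fun p _ => TFW.integrableOn_Gam (hKp p))]
      exact Finset.sum_congr rfl fun p _ => by
        rw [integral_const_mul, TFW.integral_ek_mul_conj hL p.1 p.2]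
    have hdiag : ∑ p ∈ S ×ˢ S, (((((L^3:ℝ)^((1/2:ℝ)):ℝ):ℂ) * c p.1) * ((((L^3:ℝ)^((1/2:ℝ)):ℝ):ℂ) * (starRingEnd ℂ) (c p.2))) *
            (if p.1 = p.2 then 1 else 0)
        = ((L^3 * ∑ n ∈ S, ‖c n‖^2 : ℝ) : ℂ) := by
      rw [Finset.sum_product]
      have h1 : ∀ n ∈ S, (∑ m ∈ S, (((((L^3:ℝ)^((1/2:ℝ)):ℝ):ℂ) * c n) * ((((L^3:ℝ)^((1/2:ℝ)):ℝ):ℂ) * (starRingEnd ℂ) (c m))) *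
              (if n = m then 1 else 0))
          = (((L^3:ℝ)^((1/2:ℝ)):ℝ):ℂ) * c n * ((((L^3:ℝ)^((1/2:ℝ)):ℝ):ℂ) * (starRingEnd ℂ) (c n)) := by
        intro n hn
        rw [Finset.sum_congr rfl (fun m _ => by rw [mul_ite, mul_one, mul_zero]),
          Finset.sum_ite_eq]
        exact if_pos hn
      rw [Finset.sum_congr rfl h1]
      have h2 : ∀ n : Fin 3 → ℤ, (((L^3:ℝ)^((1/2:ℝ)):ℝ):ℂ) * c n * ((((L^3:ℝ)^((1/2:ℝ)):ℝ):ℂ) * (starRingEnd ℂ) (c n))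
          = (((((L^3:ℝ)^((1/2:ℝ)):ℝ) * ((L^3:ℝ)^((1/2:ℝ)):ℝ)) * ‖c n‖^2 : ℝ):ℂ) := by
        intro n
        rw [show (((L^3:ℝ)^((1/2:ℝ)):ℝ):ℂ) * c n * ((((L^3:ℝ)^((1/2:ℝ)):ℝ):ℂ) * (starRingEnd ℂ) (c n))
            = ((((L^3:ℝ)^((1/2:ℝ)):ℝ):ℂ) * (((L^3:ℝ)^((1/2:ℝ)):ℝ):ℂ)) * (c n * (starRingEnd ℂ) (c n)) from by ring,
          TFW.mul_conj_eq]
        push_cast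
        ring
      rw [Finset.sum_congr rfl (fun n _ => h2 n)]
      rw [hC2, ← Complex.ofReal_sum, ← Finset.mul_sum]
    have := hInt.trans hdiag
    exact_mod_cast this
  -- RHS computation
  have hrhs : (∫ x in TFW.Gam L, TFW.interp L Ng (fun y => ((V y ^ 2 : ℝ) : ℂ)) x).re
      = L^3 * (((Ng:ℝ)^3)⁻¹ * ∑ m : Fin 3 → Fin Ng, (V (TFW.gridPt L Ng m))^2) := by
    have h0mem : (0 : Fin 3 → ℤ) ∈ TFW.interpModes Ng := by
      simp only [TFW.interpModes, TFW.cube, Fintype.mem_piFinset, Finset.mem_Icc, Pi.zero_apply]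
      intro i
      omega
    have hIcont : ∀ n : Fin 3 → ℤ, Continuous (fun x =>
        TFW.dft L Ng (fun y => ((V y ^ 2 : ℝ) : ℂ)) n * TFW.ek L n x) :=
      fun n => continuous_const.mul (TFW.continuous_ek n)
    have hint1 : ∫ x in TFW.Gam L, TFW.interp L Ng (fun y => ((V y ^ 2 : ℝ) : ℂ)) x
        = ((((L^3:ℝ)^((1/2:ℝ)):ℝ):ℂ)) * ∑ n ∈ TFW.interpModes Ng,
            TFW.dft L Ng (fun y => ((V y ^ 2 : ℝ) : ℂ)) n *
              (if n = 0 then ((((L^3:ℝ)^((1/2:ℝ)):ℝ)):ℂ) else 0) := by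
      calc ∫ x in TFW.Gam L, TFW.interp L Ng (fun y => ((V y ^ 2 : ℝ) : ℂ)) x
          = ∫ x in TFW.Gam L, ((((L^3:ℝ)^((1/2:ℝ)):ℝ):ℂ)) * ∑ n ∈ TFW.interpModes Ng,
              TFW.dft L Ng (fun y => ((V y ^ 2 : ℝ) : ℂ)) n * TFW.ek L n x := rfl
        _ = ((((L^3:ℝ)^((1/2:ℝ)):ℝ):ℂ)) * ∫ x in TFW.Gam L, ∑ n ∈ TFW.interpModes Ng,
              TFW.dft L Ng (fun y => ((V y ^ 2 : ℝ) : ℂ)) n * TFW.ek L n x := integral_const_mul _ _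
        _ = ((((L^3:ℝ)^((1/2:ℝ)):ℝ):ℂ)) * ∑ n ∈ TFW.interpModes Ng, ∫ x in TFW.Gam L,
              TFW.dft L Ng (fun y => ((V y ^ 2 : ℝ) : ℂ)) n * TFW.ek L n x := by
            rw [integral_finset_sum _ (fun n _ => TFW.integrableOn_Gam (hIcont n))]
        _ = _ := by
            congr 1
            refine Finset.sum_congr rfl fun n _ => ?_
            rw [integral_const_mul, TFW.integral_ek hL n]
    have hd0 : TFW.dft L Ng (fun y => ((V y ^ 2 : ℝ) : ℂ)) 0
        = ((Ng:ℂ)^3)⁻¹ * ((∑ m : Fin 3 → Fin Ng, (V (TFW.gridPt L Ng m))^2 : ℝ) : ℂ) := by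
      unfold TFW.dft
      congr 1
      rw [Complex.ofReal_sum]
      refine Finset.sum_congr rfl fun m _ => ?_
      simp
    rw [hint1]
    simp_rw [mul_ite, mul_zero]
    rw [Finset.sum_ite_eq' (TFW.interpModes Ng) 0, if_pos h0mem, hd0]
    have hcast : ((((L^3:ℝ)^((1/2:ℝ)):ℝ):ℂ)) * (((Ng:ℂ)^3)⁻¹ *
          ((∑ m : Fin 3 → Fin Ng, (V (TFW.gridPt L Ng m))^2 : ℝ) : ℂ) * ((((L^3:ℝ)^((1/2:ℝ)):ℝ)):ℂ))
        = ((((L^3:ℝ)^((1/2:ℝ)):ℝ) * (((Ng:ℝ)^3)⁻¹ *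
            (∑ m : Fin 3 → Fin Ng, (V (TFW.gridPt L Ng m))^2)) * ((L^3:ℝ)^((1/2:ℝ)):ℝ) : ℝ) : ℂ) := by
      push_cast
      ring
    rw [hcast, Complex.ofReal_re]
    linear_combination ((((Ng:ℝ)^3)⁻¹ * ∑ m : Fin 3 → Fin Ng, (V (TFW.gridPt L Ng m))^2)) * hC2
  -- Parseval
  have hparsR : ∑ n ∈ TFW.cube (k:ℤ), ‖TFW.dft L Ng (fun y => (V y : ℂ)) n‖^2
      = ((Ng:ℝ)^3)⁻¹ * ∑ m : Fin 3 → Fin Ng, (V (TFW.gridPt L Ng m))^2 := by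
    have h := TFW.parseval hL hkZ (fun y => (V y : ℂ))
    simp_rw [TFW.mul_conj_eq] at h
    have hnv : ∀ m : Fin 3 → Fin Ng, (‖((V (TFW.gridPt L Ng m) : ℝ):ℂ)‖^2 : ℝ)
        = (V (TFW.gridPt L Ng m))^2 := by
      intro m
      rw [Complex.norm_real, Real.norm_eq_abs, sq_abs]
    simp_rw [hnv] at h
    rw [← Complex.ofReal_sum, ← Complex.ofReal_sum] at h
    rw [show ((Ng:ℂ)^3)⁻¹ = ((((Ng:ℝ)^3)⁻¹ : ℝ):ℂ) from by push_cast; ring] at h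
    rw [← Complex.ofReal_mul] at h
    exact_mod_cast h
  -- subset
  have hsub : TFW.ball L (2*Nc) ⊆ TFW.cube (k:ℤ) := by
    intro n hn
    have h1 := (Finset.mem_filter.mp hn).1
    simp only [TFW.cube, Fintype.mem_piFinset, Finset.mem_Icc] at h1 ⊢
    intro i
    have := h1 i
    omega
  rw [hlhs, hrhs]
  apply Real.sqrt_le_sqrt
  have hmono : ∑ n ∈ TFW.ball L (2*Nc), ‖TFW.dft L Ng (fun y => (V y : ℂ)) n‖^2
      ≤ ∑ n ∈ TFW.cube (k:ℤ), ‖TFW.dft L Ng (fun y => (V y : ℂ)) n‖^2 :=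
    Finset.sum_le_sum_of_subset_of_nonneg hsub (fun _ _ _ => by positivity)
  exact mul_le_mul_of_nonneg_left (hmono.trans_eq hparsR) (by positivity)
end
end
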